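/- arXiv:0810.0118 — 3 statements merged into one kernel-verified Lean document; each statement's English description precedes it below -/
import Mathlib

section
/- Let k and l be integers and let ℤ² act on the abelian group ℤ² so that the first standard generator acts by (x, y) ↦ (x + k·y, y) and the second standard generator acts by (x, y) ↦ (x + l·y, y). Then the second group cohomology H²(ℤ², ℤ²) with coefficients in this module is isomorphic, as an abelian group, to ℤ/gcd(k,l)ℤ × ℤ. -/
namespace TTBAux

open groupCohomology Multiplicative

abbrev G2 : Type := Multiplicative (ℤ × ℤ)

def aa : G2 := ofAdd (1, 0)
def bb : G2 := ofAdd (0, 1)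

/-- `n*(n-1)/2`. -/
def T (n : ℤ) : ℤ := n * (n - 1) / 2

lemma two_mul_T (n : ℤ) : 2 * T n = n * (n - 1) := by
  have h : (2 : ℤ) ∣ n * (n - 1) := by
    have : Even (n * (n - 1)) := by
      simpa [mul_comm] using Int.even_mul_succ_self (n - 1)
    exact this.two_dvd
  exact Int.mul_ediv_cancel' h

lemma T_add (m n : ℤ) : T (m + n) = T m + T n + m * n := by
  have h : 2 * T (m + n) = 2 * (T m + T n + m * n) := by
    rw [two_mul_T, mul_add, mul_add, two_mul_T, two_mul_T]; ring
  exact mul_left_cancel₀ two_ne_zero h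

lemma T_one : T 1 = 0 := rfl
lemma T_zero : T 0 = 0 := rfl

section rho

variable {k l : ℤ} {ρ : Representation ℤ G2 (ℤ × ℤ)}

lemma rho_apply
    (h1 : ∀ v : ℤ × ℤ, ρ (ofAdd ((1 : ℤ), (0 : ℤ))) v = (v.1 + k * v.2, v.2))
    (h2 : ∀ v : ℤ × ℤ, ρ (ofAdd ((0 : ℤ), (1 : ℤ))) v = (v.1 + l * v.2, v.2))
    (g : G2) (v : ℤ × ℤ) :
    ρ g v = (v.1 + ((toAdd g).1 * k + (toAdd g).2 * l) * v.2, v.2) := by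
  have hmul : ∀ (x y : G2) (v : ℤ × ℤ), ρ (x * y) v = ρ x (ρ y v) := by
    intro x y v
    rw [map_mul]; rfl
  have hainv : ∀ v : ℤ × ℤ, ρ (ofAdd ((-1 : ℤ), (0 : ℤ))) v = (v.1 - k * v.2, v.2) := by
    intro v
    have hone : (ofAdd ((1 : ℤ), (0 : ℤ))) * (ofAdd ((-1 : ℤ), (0 : ℤ))) = (1 : G2) := by
      rw [← ofAdd_add]; norm_num
    have h0 : ρ (ofAdd ((1 : ℤ), (0 : ℤ))) (ρ (ofAdd ((-1 : ℤ), (0 : ℤ))) v) = v := by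
      rw [← hmul, hone, map_one]; rfl
    rw [h1 _] at h0
    obtain ⟨hx, hy⟩ := Prod.ext_iff.1 h0
    simp only at hx hy
    rw [Prod.ext_iff]
    refine ⟨?_, hy⟩
    rw [hy] at hx
    simp only
    linarith
  have hbinv : ∀ v : ℤ × ℤ, ρ (ofAdd ((0 : ℤ), (-1 : ℤ))) v = (v.1 - l * v.2, v.2) := by
    intro v
    have hone : (ofAdd ((0 : ℤ), (1 : ℤ))) * (ofAdd ((0 : ℤ), (-1 : ℤ))) = (1 : G2) := by
      rw [← ofAdd_add]; norm_num
    have h0 : ρ (ofAdd ((0 : ℤ), (1 : ℤ))) (ρ (ofAdd ((0 : ℤ), (-1 : ℤ))) v) = v := by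
      rw [← hmul, hone, map_one]; rfl
    rw [h2 _] at h0
    obtain ⟨hx, hy⟩ := Prod.ext_iff.1 h0
    simp only at hx hy
    rw [Prod.ext_iff]
    refine ⟨?_, hy⟩
    rw [hy] at hx
    simp only
    linarith
  have hrow : ∀ (s : ℤ) (v : ℤ × ℤ), ρ (ofAdd (s, (0 : ℤ))) v = (v.1 + s * k * v.2, v.2) := by
    intro s
    induction s using Int.induction_on with
    | zero => intro v; show ρ 1 v = _; rw [map_one]; simp
    | succ n ih =>
        intro v
        have : (ofAdd ((n + 1 : ℤ), (0 : ℤ))) = ofAdd ((1 : ℤ), (0 : ℤ)) * ofAdd ((n : ℤ), (0 : ℤ)) := by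
          rw [← ofAdd_add]
          norm_num [add_comm]
        rw [this, hmul, ih, h1]
        rw [Prod.mk.injEq]
        constructor <;> ring
    | pred n ih =>
        intro v
        have : (ofAdd ((-n - 1 : ℤ), (0 : ℤ))) = ofAdd ((-1 : ℤ), (0 : ℤ)) * ofAdd ((-n : ℤ), (0 : ℤ)) := by
          rw [← ofAdd_add]
          norm_num [sub_eq_add_neg, add_comm]
        rw [this, hmul, ih, hainv]
        rw [Prod.mk.injEq]
        constructor <;> ring
  have hcol : ∀ (t : ℤ) (v : ℤ × ℤ), ρ (ofAdd ((0 : ℤ), t)) v = (v.1 + t * l * v.2, v.2) := by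
    intro t
    induction t using Int.induction_on with
    | zero => intro v; show ρ 1 v = _; rw [map_one]; simp
    | succ n ih =>
        intro v
        have : (ofAdd ((0 : ℤ), (n + 1 : ℤ))) = ofAdd ((0 : ℤ), (1 : ℤ)) * ofAdd ((0 : ℤ), (n : ℤ)) := by
          rw [← ofAdd_add]
          norm_num [add_comm]
        rw [this, hmul, ih, h2]
        rw [Prod.mk.injEq]
        constructor <;> ring
    | pred n ih =>
        intro v
        have : (ofAdd ((0 : ℤ), (-n - 1 : ℤ))) = ofAdd ((0 : ℤ), (-1 : ℤ)) * ofAdd ((0 : ℤ), (-n : ℤ)) := by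
          rw [← ofAdd_add]
          norm_num [sub_eq_add_neg, add_comm]
        rw [this, hmul, ih, hbinv]
        rw [Prod.mk.injEq]
        constructor <;> ring
  have hsplit : g = ofAdd ((toAdd g).1, (0 : ℤ)) * ofAdd ((0 : ℤ), (toAdd g).2) := by
    rw [← ofAdd_add]
    simp
  conv_lhs => rw [hsplit]
  rw [hmul, hcol, hrow, Prod.mk.injEq]
  constructor <;> ring

end rho

/-- Carrier for the extension group built from a 2-cocycle. -/
structure ExtG (ρ : Representation ℤ G2 (ℤ × ℤ)) (f : G2 × G2 → ℤ × ℤ) : Type where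
  m : ℤ × ℤ
  g : G2

namespace ExtG

variable {ρ : Representation ℤ G2 (ℤ × ℤ)} {f : G2 × G2 → ℤ × ℤ}

instance : Mul (ExtG ρ f) := ⟨fun x y => ⟨x.m + ρ x.g y.m + f (x.g, y.g), x.g * y.g⟩⟩
instance : One (ExtG ρ f) := ⟨⟨0, 1⟩⟩
instance : Inv (ExtG ρ f) := ⟨fun x => ⟨-(ρ x.g⁻¹ x.m) - f (x.g⁻¹, x.g), x.g⁻¹⟩⟩

lemma mul_def (x y : ExtG ρ f) :
    x * y = ⟨x.m + ρ x.g y.m + f (x.g, y.g), x.g * y.g⟩ := rfl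

lemma one_def : (1 : ExtG ρ f) = ⟨0, 1⟩ := rfl

lemma inv_def (x : ExtG ρ f) :
    x⁻¹ = ⟨-(ρ x.g⁻¹ x.m) - f (x.g⁻¹, x.g), x.g⁻¹⟩ := rfl

end ExtG

@[reducible]
def extGroup (ρ : Representation ℤ G2 (ℤ × ℤ)) (f : G2 × G2 → ℤ × ℤ)
    (hco : ∀ g h j : G2, f (g * h, j) + f (g, h) = ρ g (f (h, j)) + f (g, h * j))
    (hn1 : ∀ g, f (1, g) = 0) (hn2 : ∀ g, f (g, 1) = 0) : Group (ExtG ρ f) :=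
  Group.ofLeftAxioms
    (fun x y z => by
      rw [ExtG.mul_def x y, ExtG.mul_def y z, ExtG.mul_def, ExtG.mul_def, ExtG.mk.injEq]
      constructor
      · have hm : ρ (x.g * y.g) z.m = ρ x.g (ρ y.g z.m) := by rw [map_mul]; rfl
        have hc := hco x.g y.g z.g
        simp only [map_add, hm]
        linear_combination hc
      · exact mul_assoc _ _ _)
    (fun x => by
      rw [ExtG.one_def, ExtG.mul_def]
      cases x with
      | mk m g =>
        rw [ExtG.mk.injEq]
        constructor
        · simp only [map_one]
          rw [hn1]
          simp
        · exact one_mul g)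
    (fun x => by
      rw [ExtG.inv_def, ExtG.mul_def, ExtG.one_def, ExtG.mk.injEq]
      constructor
      · simp only
        abel
      · exact inv_mul_cancel x.g)

lemma exists_coboundary (ρ : Representation ℤ G2 (ℤ × ℤ)) (f : G2 × G2 → ℤ × ℤ)
    (hco : ∀ g h j : G2, f (g * h, j) + f (g, h) = ρ g (f (h, j)) + f (g, h * j))
    (hn1 : ∀ g, f (1, g) = 0) (hn2 : ∀ g, f (g, 1) = 0)
    (hsym : f (aa, bb) = f (bb, aa)) :
    ∃ φ : G2 → ℤ × ℤ, ∀ g h : G2, ρ g (φ h) - φ (g * h) + φ g = f (g, h) := by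
  letI : Group (ExtG ρ f) := extGroup ρ f hco hn1 hn2
  set ea : ExtG ρ f := ⟨0, aa⟩ with hea
  set eb : ExtG ρ f := ⟨0, bb⟩ with heb
  have hcomm : Commute ea eb := by
    show ea * eb = eb * ea
    rw [ExtG.mul_def, ExtG.mul_def, ExtG.mk.injEq]
    constructor
    · simp [hea, heb, hsym]
    · exact mul_comm _ _
  let π : ExtG ρ f →* G2 :=
    { toFun := ExtG.g, map_one' := rfl, map_mul' := fun _ _ => rfl }
  let t : ℤ × ℤ → ExtG ρ f := fun p => ea ^ p.1 * eb ^ p.2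
  have ht : ∀ p q : ℤ × ℤ, t (p + q) = t p * t q := by
    intro p q
    show ea ^ (p.1 + q.1) * eb ^ (p.2 + q.2) = ea ^ p.1 * eb ^ p.2 * (ea ^ q.1 * eb ^ q.2)
    rw [zpow_add, zpow_add, mul_assoc, ← mul_assoc (ea ^ q.1), (hcomm.zpow_zpow q.1 p.2).eq]
    simp [mul_assoc]
  have hg : ∀ p : ℤ × ℤ, (t p).g = ofAdd p := by
    intro p
    show π (ea ^ p.1 * eb ^ p.2) = _
    rw [map_mul, map_zpow, map_zpow]
    show aa ^ p.1 * bb ^ p.2 = _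
    show ofAdd (p.1 • ((1 : ℤ), (0 : ℤ))) * ofAdd (p.2 • ((0 : ℤ), (1 : ℤ))) = _
    rw [← ofAdd_add]
    congr 1
    simp [Prod.ext_iff]
  refine ⟨fun g => -(t (toAdd g)).m, fun g h => ?_⟩
  have key := ht (toAdd g) (toAdd h)
  have h1' : toAdd g + toAdd h = toAdd (g * h) := rfl
  rw [h1', ExtG.mul_def] at key
  have hkey := congrArg ExtG.m key
  simp only [hg, ofAdd_toAdd] at hkey
  rw [map_neg]
  linear_combination hkey


section shim

variable {G : Type} [Group G]

abbrev twoCocycles (A : Rep ℤ G) := cocycles₂ A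

def twoCoboundaries (A : Rep ℤ G) : Submodule ℤ (cocycles₂ A) :=
  AddSubgroup.toIntSubmodule
    ((coboundaries₂ A).toAddSubgroup.comap (cocycles₂ A).toAddSubgroup.subtype)

lemma mem_twoCocycles_iff {A : Rep ℤ G} (f : G × G → A) :
    f ∈ twoCocycles A ↔ ∀ g h j : G, f (g * h, j) + f (g, h) = A.ρ g (f (h, j)) + f (g, h * j) :=
  mem_cocycles₂_iff f

lemma twoCocycles_map_one_fst {A : Rep ℤ G} (f : twoCocycles A) (g : G) :
    f (1, g) = f (1, 1) := cocycles₂_map_one_fst f g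

lemma twoCocycles_map_one_snd {A : Rep ℤ G} (f : twoCocycles A) (g : G) :
    f (g, 1) = A.ρ g (f (1, 1)) := cocycles₂_map_one_snd f g

lemma mem_twoCoboundaries_iff {A : Rep ℤ G} (f : twoCocycles A) :
    f ∈ twoCoboundaries A ↔ ∃ x : G → A, ∀ g h : G, A.ρ g (x h) - x (g * h) + x g = f (g, h) := by
  show (∃ x, (d₁₂ A).hom x = f.1) ↔ _
  constructor
  · rintro ⟨x, hx⟩
    refine ⟨x, fun g h => ?_⟩
    have := congrFun hx (g, h)
    rw [d₁₂_hom_apply] at this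
    exact this
  · rintro ⟨x, hx⟩
    exact ⟨x, funext fun p => by rw [d₁₂_hom_apply]; exact hx p.1 p.2⟩

noncomputable def h2Equiv (A : Rep ℤ G) :
    (twoCocycles A ⧸ twoCoboundaries A) ≃+ groupCohomology A 2 :=
  (QuotientAddGroup.quotientAddEquivOfEq
    (M := (twoCoboundaries A).toAddSubgroup) (N := (H2π A).hom.toAddMonoidHom.ker) (by
    ext x
    rw [AddMonoidHom.mem_ker]
    exact (H2π_eq_zero_iff x).symm)).trans
    (QuotientAddGroup.quotientKerEquivOfSurjective (H2π A).hom.toAddMonoidHom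
      (fun y => H2_induction_on y (fun z => ⟨z, rfl⟩)))

end shim

def uFun : G2 × G2 → ℤ × ℤ := fun p => ((toAdd p.1).2 * (toAdd p.2).1, 0)

def wFun (k l : ℤ) : G2 × G2 → ℤ × ℤ := fun p =>
  (-k * ((toAdd p.1).1 * (toAdd p.2).1 * (toAdd p.2).2 + T (toAdd p.1).1 * (toAdd p.2).2)
      + l * T (toAdd p.1).2 * (toAdd p.2).1,
    (toAdd p.1).2 * (toAdd p.2).1)

section main

variable {k l : ℤ} {ρ : Representation ℤ G2 (ℤ × ℤ)}
  (h1 : ∀ v : ℤ × ℤ, ρ (ofAdd ((1 : ℤ), (0 : ℤ))) v = (v.1 + k * v.2, v.2))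
  (h2 : ∀ v : ℤ × ℤ, ρ (ofAdd ((0 : ℤ), (1 : ℤ))) v = (v.1 + l * v.2, v.2))

include h1 h2

lemma uFun_mem : uFun ∈ twoCocycles (Rep.of ρ) := by
  rw [mem_twoCocycles_iff]
  intro g h j
  show uFun (g * h, j) + uFun (g, h) = ρ g (uFun (h, j)) + uFun (g, h * j)
  rw [rho_apply h1 h2]
  simp only [uFun, toAdd_mul, Prod.fst_add, Prod.snd_add, Prod.mk_add_mk, Prod.mk.injEq]
  exact ⟨by ring, trivial⟩

lemma wFun_mem : wFun k l ∈ twoCocycles (Rep.of ρ) := by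
  rw [mem_twoCocycles_iff]
  intro g h j
  show wFun k l (g * h, j) + wFun k l (g, h) = ρ g (wFun k l (h, j)) + wFun k l (g, h * j)
  rw [rho_apply h1 h2]
  simp only [wFun, toAdd_mul, Prod.fst_add, Prod.snd_add, Prod.mk_add_mk, Prod.mk.injEq, T_add]
  constructor <;> ring

end main


variable {ρ : Representation ℤ G2 (ℤ × ℤ)}

/-- Underlying function of a 2-cocycle, valued in `ℤ × ℤ`. -/
def vF (F : twoCocycles (Rep.of ρ)) : G2 × G2 → ℤ × ℤ := F.1

lemma vF_zero (p : G2 × G2) : vF (0 : twoCocycles (Rep.of ρ)) p = 0 := rfl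

lemma vF_add (F F' : twoCocycles (Rep.of ρ)) (p : G2 × G2) :
    vF (F + F') p = vF F p + vF F' p := rfl

lemma vF_zsmul (n : ℤ) (F : twoCocycles (Rep.of ρ)) (p : G2 × G2) :
    vF (n • F) p = n • vF F p := rfl

/-- Antisymmetrized evaluation of a 2-cocycle at the two generators. -/
noncomputable def dd (F : twoCocycles (Rep.of ρ)) : ℤ × ℤ :=
  vF F (aa, bb) - vF F (bb, aa)

lemma dd_add (F F' : twoCocycles (Rep.of ρ)) : dd (F + F') = dd F + dd F' := by
  simp only [dd, vF_add]
  ring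

lemma dd_zsmul (n : ℤ) (F : twoCocycles (Rep.of ρ)) : dd (n • F) = n • dd F := by
  simp only [dd, vF_zsmul]
  rw [smul_sub]

lemma vF_cocycle (F : twoCocycles (Rep.of ρ)) :
    ∀ g h j : G2, vF F (g * h, j) + vF F (g, h) = ρ g (vF F (h, j)) + vF F (g, h * j) :=
  (mem_twoCocycles_iff (A := Rep.of ρ) F.1).1 F.2

lemma vF_one_fst (F : twoCocycles (Rep.of ρ)) (g : G2) : vF F (1, g) = vF F (1, 1) :=
  twoCocycles_map_one_fst F g

lemma vF_one_snd (F : twoCocycles (Rep.of ρ)) (g : G2) : vF F (g, 1) = ρ g (vF F (1, 1)) :=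
  twoCocycles_map_one_snd F g

lemma mem_coboundaries_iff' (F : twoCocycles (Rep.of ρ)) :
    F ∈ twoCoboundaries (Rep.of ρ) ↔
      ∃ x : G2 → ℤ × ℤ, ∀ g h : G2, ρ g (x h) - x (g * h) + x g = vF F (g, h) :=
  mem_twoCoboundaries_iff F

variable {k l : ℤ}
  (h1 : ∀ v : ℤ × ℤ, ρ (ofAdd ((1 : ℤ), (0 : ℤ))) v = (v.1 + k * v.2, v.2))
  (h2 : ∀ v : ℤ × ℤ, ρ (ofAdd ((0 : ℤ), (1 : ℤ))) v = (v.1 + l * v.2, v.2))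

include h1 h2

lemma dd_coboundary (F : twoCocycles (Rep.of ρ)) (hF : F ∈ twoCoboundaries (Rep.of ρ)) :
    ∃ y z : ℤ, dd F = (k * y - l * z, 0) := by
  rw [mem_coboundaries_iff'] at hF
  obtain ⟨x, hx⟩ := hF
  refine ⟨(x bb).2, (x aa).2, ?_⟩
  have hab : aa * bb = bb * aa := mul_comm _ _
  have e1 := hx aa bb
  have e2 := hx bb aa
  have hra : ρ aa (x bb) = ((x bb).1 + k * (x bb).2, (x bb).2) := by
    rw [rho_apply h1 h2]; norm_num [aa]
  have hrb : ρ bb (x aa) = ((x aa).1 + l * (x aa).2, (x aa).2) := by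
    rw [rho_apply h1 h2]; norm_num [bb]
  rw [dd, ← e1, ← e2, hab, hra, hrb, Prod.ext_iff]
  constructor
  · simp only [Prod.fst_add, Prod.fst_sub, Prod.snd_add, Prod.snd_sub]
    ring
  · simp only [Prod.fst_add, Prod.fst_sub, Prod.snd_add, Prod.snd_sub]
    ring

lemma mem_coboundaries_of_dd (F : twoCocycles (Rep.of ρ))
    (hd1 : ((Int.gcd k l : ℤ)) ∣ (dd F).1) (hd2 : (dd F).2 = 0) :
    F ∈ twoCoboundaries (Rep.of ρ) := by
  obtain ⟨c, hc⟩ := hd1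
  set c₀ : ℤ × ℤ := vF F (1, 1) with hc₀
  set P : ℤ := -(c * Int.gcdB k l) - c₀.2 with hP
  set Q : ℤ := c * Int.gcdA k l - c₀.2 with hQ
  set ψ : G2 → ℤ × ℤ := fun g => c₀ + (0, (toAdd g).1 * P + (toAdd g).2 * Q) with hψ
  set f2 : G2 × G2 → ℤ × ℤ :=
    fun p => vF F p - (ρ p.1 (ψ p.2) - ψ (p.1 * p.2) + ψ p.1) with hf2
  have hψ1 : ψ 1 = c₀ := by
    show c₀ + ((0 : ℤ), (0 : ℤ) * P + (0 : ℤ) * Q) = c₀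
    simp
  have hFid := vF_cocycle F
  have hco : ∀ g h j : G2, f2 (g * h, j) + f2 (g, h) = ρ g (f2 (h, j)) + f2 (g, h * j) := by
    intro g h j
    have hFgh := hFid g h j
    have hm1 : ρ (g * h) (ψ j) = ρ g (ρ h (ψ j)) := by rw [map_mul]; rfl
    show vF F (g * h, j) - (ρ (g * h) (ψ j) - ψ (g * h * j) + ψ (g * h))
        + (vF F (g, h) - (ρ g (ψ h) - ψ (g * h) + ψ g))
      = ρ g (vF F (h, j) - (ρ h (ψ j) - ψ (h * j) + ψ h))
        + (vF F (g, h * j) - (ρ g (ψ (h * j)) - ψ (g * (h * j)) + ψ g))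
    simp only [map_sub, map_add]
    rw [mul_assoc g h j, ← hm1]
    linear_combination hFgh
  have hn1' : ∀ g : G2, f2 (1, g) = 0 := by
    intro g
    show vF F (1, g) - (ρ 1 (ψ g) - ψ (1 * g) + ψ 1) = 0
    rw [vF_one_fst, map_one, hψ1, one_mul]
    show vF F (1, 1) - (ψ g - ψ g + c₀) = 0
    rw [← hc₀]
    ring
  have hn2' : ∀ g : G2, f2 (g, 1) = 0 := by
    intro g
    show vF F (g, 1) - (ρ g (ψ 1) - ψ (g * 1) + ψ g) = 0
    rw [vF_one_snd, hψ1, mul_one, ← hc₀]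
    ring
  have hsym : f2 (aa, bb) = f2 (bb, aa) := by
    have hab : aa * bb = bb * aa := mul_comm _ _
    have hψa : ψ aa = (c₀.1, c₀.2 + P) := by
      show c₀ + ((0 : ℤ), (1 : ℤ) * P + (0 : ℤ) * Q) = _
      rw [Prod.ext_iff]
      constructor <;> simp
    have hψb : ψ bb = (c₀.1, c₀.2 + Q) := by
      show c₀ + ((0 : ℤ), (0 : ℤ) * P + (1 : ℤ) * Q) = _
      rw [Prod.ext_iff]
      constructor <;> simp
    have hra : ρ aa (ψ bb) = ((ψ bb).1 + k * (ψ bb).2, (ψ bb).2) := by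
      rw [rho_apply h1 h2]; norm_num [aa]
    have hrb : ρ bb (ψ aa) = ((ψ aa).1 + l * (ψ aa).2, (ψ aa).2) := by
      rw [rho_apply h1 h2]; norm_num [bb]
    have hgcd : (Int.gcd k l : ℤ) = k * Int.gcdA k l + l * Int.gcdB k l := Int.gcd_eq_gcd_ab k l
    have hdd1 : (vF F (aa, bb)).1 - (vF F (bb, aa)).1 = (Int.gcd k l : ℤ) * c := by
      have h' : (dd F).1 = (Int.gcd k l : ℤ) * c := by rw [hc]
      exact h'
    have hdd2 : (vF F (aa, bb)).2 - (vF F (bb, aa)).2 = 0 := hd2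
    show vF F (aa, bb) - (ρ aa (ψ bb) - ψ (aa * bb) + ψ aa)
        = vF F (bb, aa) - (ρ bb (ψ aa) - ψ (bb * aa) + ψ bb)
    rw [hab, hra, hrb, hψa, hψb, Prod.ext_iff]
    constructor
    · simp only [Prod.fst_add, Prod.fst_sub, Prod.snd_add, Prod.snd_sub, hP, hQ]
      linear_combination hdd1 + c * hgcd
    · simp only [Prod.fst_add, Prod.fst_sub, Prod.snd_add, Prod.snd_sub]
      linear_combination hdd2
  obtain ⟨φ, hφ⟩ := exists_coboundary ρ f2 hco hn1' hn2' hsym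
  rw [mem_coboundaries_iff']
  refine ⟨fun g => φ g + ψ g, fun g h => ?_⟩
  have hkey : ρ g (φ h) - φ (g * h) + φ g
      = vF F (g, h) - (ρ g (ψ h) - ψ (g * h) + ψ g) := hφ g h
  rw [map_add]
  linear_combination hkey


end TTBAux

open TTBAux Multiplicative groupCohomology CategoryTheory

/-- Let `k, l : ℤ` and let `ℤ²` act on `ℤ²` so that the first standard
generator acts by `(x, y) ↦ (x + k·y, y)` and the second by `(x, y) ↦ (x + l·y, y)`.
Then the second group cohomology `H²(ℤ², ℤ²)` with coefficients in this module is
isomorphic, as an abelian group, to `ℤ/gcd(k,l)ℤ × ℤ` (with `ZMod 0 = ℤ` covering the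
case `gcd(k,l) = 0`). -/
theorem groupCohomology_two_torus_bundle (k l : ℤ)
    (ρ : Representation ℤ (Multiplicative (ℤ × ℤ)) (ℤ × ℤ))
    (h1 : ∀ v : ℤ × ℤ, ρ (Multiplicative.ofAdd ((1 : ℤ), (0 : ℤ))) v = (v.1 + k * v.2, v.2))
    (h2 : ∀ v : ℤ × ℤ, ρ (Multiplicative.ofAdd ((0 : ℤ), (1 : ℤ))) v = (v.1 + l * v.2, v.2)) :
    Nonempty ((groupCohomology (Rep.of ρ) 2) ≃+ (ZMod (Int.gcd k l) × ℤ)) := by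
  classical
  set N : ℕ := Int.gcd k l with hN
  -- the antisymmetrization homomorphism on 2-cocycles
  let Φ₀ : twoCocycles (Rep.of ρ) →+ ZMod N × ℤ :=
    { toFun := fun F => (((dd F).1 : ZMod N), (dd F).2)
      map_zero' := by
        have h0 : dd (ρ := ρ) 0 = 0 := by
          show vF 0 (aa, bb) - vF 0 (bb, aa) = 0
          rw [vF_zero, vF_zero, sub_zero]
        show (((dd (0 : twoCocycles (Rep.of ρ))).1 : ZMod N), (dd (0 : twoCocycles (Rep.of ρ))).2) = 0
        rw [h0]
        simp
      map_add' := fun F F' => by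
        show (((dd (F + F')).1 : ZMod N), (dd (F + F')).2)
          = (((dd F).1 : ZMod N), (dd F).2) + (((dd F').1 : ZMod N), (dd F').2)
        rw [dd_add, Prod.ext_iff]
        constructor
        · show (((dd F).1 + (dd F').1 : ℤ) : ZMod N) = _
          push_cast
          rfl
        · show (dd F).2 + (dd F').2 = _
          rfl }
  have hΦ₀ : ∀ F, Φ₀ F = (((dd F).1 : ZMod N), (dd F).2) := fun _ => rfl
  have hbound : ∀ F, F ∈ twoCoboundaries (Rep.of ρ) → Φ₀ F = 0 := by
    intro F hF
    obtain ⟨y, z, hyz⟩ := dd_coboundary h1 h2 F hF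
    rw [hΦ₀, hyz, Prod.ext_iff]
    constructor
    · show ((k * y - l * z : ℤ) : ZMod N) = 0
      rw [ZMod.intCast_zmod_eq_zero_iff_dvd]
      exact dvd_sub (Dvd.dvd.mul_right (Int.gcd_dvd_left k l) y)
        (Dvd.dvd.mul_right (Int.gcd_dvd_right k l) z)
    · rfl
  let Φ : (twoCocycles (Rep.of ρ) ⧸ twoCoboundaries (Rep.of ρ)) →ₗ[ℤ] ZMod N × ℤ :=
    Submodule.liftQ (twoCoboundaries (Rep.of ρ)) Φ₀.toIntLinearMap
      (fun F hF => hbound F hF)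
  have hΦmk : ∀ F : twoCocycles (Rep.of ρ), Φ (Submodule.Quotient.mk F) = Φ₀ F :=
    fun F => rfl
  have hinj : Function.Injective Φ := by
    rw [← LinearMap.ker_eq_bot]
    apply Submodule.ker_liftQ_eq_bot
    intro F hF
    have hF' : Φ₀ F = 0 := hF
    rw [hΦ₀, Prod.ext_iff] at hF'
    obtain ⟨hF1, hF2⟩ := hF'
    refine mem_coboundaries_of_dd h1 h2 F ?_ hF2
    rw [← ZMod.intCast_zmod_eq_zero_iff_dvd]
    exact hF1
  have hsurj : Function.Surjective Φ := by
    intro z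
    obtain ⟨x, hx⟩ := ZMod.intCast_surjective z.1
    set U : twoCocycles (Rep.of ρ) := ⟨uFun, uFun_mem h1 h2⟩ with hU
    set W : twoCocycles (Rep.of ρ) := ⟨wFun k l, wFun_mem h1 h2⟩ with hW
    have hdU : dd U = (-1, 0) := by
      show vF U (aa, bb) - vF U (bb, aa) = _
      show uFun (aa, bb) - uFun (bb, aa) = _
      norm_num [uFun, aa, bb, Prod.ext_iff]
    have hdW : dd W = (0, -1) := by
      show vF W (aa, bb) - vF W (bb, aa) = _
      show wFun k l (aa, bb) - wFun k l (bb, aa) = _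
      norm_num [wFun, aa, bb, T, Prod.ext_iff]
    refine ⟨Submodule.Quotient.mk ((-x) • U + (-z.2) • W), ?_⟩
    rw [hΦmk, hΦ₀, dd_add, dd_zsmul, dd_zsmul, hdU, hdW, Prod.ext_iff]
    constructor
    · show ((((-x) • ((-1 : ℤ), (0 : ℤ)) + (-z.2) • ((0 : ℤ), (-1 : ℤ))).1 : ℤ) : ZMod N) = z.1
      rw [← hx]
      push_cast [Prod.ext_iff, smul_eq_mul]
      ring_nf
      simp
    · show ((-x) • ((-1 : ℤ), (0 : ℤ)) + (-z.2) • ((0 : ℤ), (-1 : ℤ))).2 = z.2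
      simp [smul_eq_mul]
  let e1 : (twoCocycles (Rep.of ρ) ⧸ twoCoboundaries (Rep.of ρ)) ≃ₗ[ℤ] ZMod N × ℤ := LinearEquiv.ofBijective Φ ⟨hinj, hsurj⟩
  let e0 : (groupCohomology (Rep.of ρ) 2) ≃+ (twoCocycles (Rep.of ρ) ⧸ twoCoboundaries (Rep.of ρ)) :=
    (h2Equiv (Rep.of ρ)).symm
  exact ⟨e0.trans e1.toAddEquiv⟩
end

section
/- Every continuous map f : 𝕋 × 𝕋 → 𝕋 from the 2-torus to the circle is homotopic to a map of the form (z₁, z₂) ↦ z₁^k · z₂^l for some integers k and l. -/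
open Complex Set Real Topology

noncomputable section
namespace TorusMono

lemma mem_slitPlane_of_ne_neg_one {z : Circle} (h : (z : ℂ) ≠ -1) :
    (z : ℂ) ∈ Complex.slitPlane := by
  rw [Complex.mem_slitPlane_iff]
  by_contra hc
  push_neg at hc
  obtain ⟨h1, h2⟩ := hc
  apply h
  have habs : ‖(z : ℂ)‖ = 1 := Circle.norm_coe z
  have hz : (z : ℂ) = ((z : ℂ).re : ℂ) := Complex.ext rfl (by simpa using h2)
  rw [hz] at habs ⊢
  rw [Complex.norm_real, Real.norm_eq_abs] at habs
  have : (z : ℂ).re = -1 := by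
    rcases abs_cases (z : ℂ).re with ⟨h3, _⟩ | ⟨h3, _⟩ <;> linarith
  rw [this]
  norm_num

lemma int_mul_two_pi_ne {n a : ℤ} (h : (n : ℝ) * (2 * π) = (a : ℝ) * (2 * π) + π) : False := by
  have hπ : (π : ℝ) ≠ 0 := Real.pi_ne_zero
  have h2 : ((2 * n : ℤ) : ℝ) * π = ((2 * a + 1 : ℤ) : ℝ) * π := by push_cast; linarith
  have h3 : (2 * n : ℤ) = 2 * a + 1 := by exact_mod_cast mul_right_cancel₀ hπ h2
  omega

lemma exists_no_int_between {a b : ℤ} (hlt : (a : ℝ) * (2 * π) < (b : ℝ) * (2 * π)) :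
    ∃ c ∈ Icc ((a : ℝ) * (2 * π)) ((b : ℝ) * (2 * π)), ∀ n : ℤ, c ≠ (n : ℝ) * (2 * π) := by
  have hab : (a : ℝ) < b := by
    have h2π : (0 : ℝ) < 2 * π := by positivity
    exact lt_of_mul_lt_mul_right hlt h2π.le
  have hab' : a + 1 ≤ b := Int.add_one_le_iff.mpr (by exact_mod_cast hab)
  have hab'' : ((a : ℝ) + 1) ≤ (b : ℝ) := by exact_mod_cast hab'
  refine ⟨(a : ℝ) * (2 * π) + π, ⟨by nlinarith [Real.pi_pos], by nlinarith [Real.pi_pos]⟩, ?_⟩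
  intro n hn
  exact int_mul_two_pi_ne (n := n) (a := a) hn.symm

lemma const_of_int_aux {X : Type} [TopologicalSpace X] [PreconnectedSpace X] {ψ : X → ℝ}
    (hc : Continuous ψ) (h : ∀ x, ∃ n : ℤ, ψ x = (n : ℝ) * (2 * π)) {x y : X}
    (hlt : ψ x < ψ y) : False := by
  obtain ⟨a, ha⟩ := h x
  obtain ⟨b, hb⟩ := h y
  obtain ⟨c, hcmem, hcno⟩ := exists_no_int_between (a := a) (b := b) (by rw [← ha, ← hb]; exact hlt)
  have hmem : c ∈ Icc (ψ x) (ψ y) := by rw [ha, hb]; exact hcmem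
  obtain ⟨z, hz⟩ := intermediate_value_univ x y hc hmem
  obtain ⟨n, hn⟩ := h z
  exact hcno n (by rw [← hz, hn])

lemma const_of_int {X : Type} [TopologicalSpace X] [PreconnectedSpace X] {ψ : X → ℝ}
    (hc : Continuous ψ) (h : ∀ x, ∃ n : ℤ, ψ x = (n : ℝ) * (2 * π)) (x y : X) : ψ x = ψ y := by
  rcases lt_trichotomy (ψ x) (ψ y) with hlt | he | hlt
  · exact absurd (const_of_int_aux hc h hlt) (by simp)
  · exact he
  · exact absurd (const_of_int_aux hc h hlt) (by simp)

lemma const_of_int_Icc {ψ : ℝ → ℝ} (hc : ContinuousOn ψ (Icc 0 1))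
    (h : ∀ t ∈ Icc (0 : ℝ) 1, ∃ n : ℤ, ψ t = (n : ℝ) * (2 * π)) : ψ 0 = ψ 1 := by
  rcases lt_trichotomy (ψ 0) (ψ 1) with hlt | he | hlt
  · obtain ⟨a, ha⟩ := h 0 ⟨le_rfl, zero_le_one⟩
    obtain ⟨b, hb⟩ := h 1 ⟨zero_le_one, le_rfl⟩
    obtain ⟨c, hcmem, hcno⟩ := exists_no_int_between (a := a) (b := b)
      (by rw [← ha, ← hb]; exact hlt)
    have hmem : c ∈ Icc (ψ 0) (ψ 1) := by rw [ha, hb]; exact hcmem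
    obtain ⟨z, hz1, hz2⟩ := intermediate_value_Icc zero_le_one hc hmem
    obtain ⟨n, hn⟩ := h z hz1
    exact absurd (by rw [← hz2, hn] : c = (n:ℝ) * (2*π)) (hcno n)
  · exact he
  · obtain ⟨a, ha⟩ := h 1 ⟨zero_le_one, le_rfl⟩
    obtain ⟨b, hb⟩ := h 0 ⟨le_rfl, zero_le_one⟩
    obtain ⟨c, hcmem, hcno⟩ := exists_no_int_between (a := a) (b := b)
      (by rw [← ha, ← hb]; exact hlt)
    have hmem : c ∈ Icc (ψ 1) (ψ 0) := by rw [ha, hb]; exact hcmem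
    obtain ⟨z, hz1, hz2⟩ := intermediate_value_Icc' zero_le_one hc hmem
    obtain ⟨n, hn⟩ := h z hz1
    exact absurd (by rw [← hz2, hn] : c = (n:ℝ) * (2*π)) (hcno n)

lemma circle_exp_sub (a b : ℝ) : Circle.exp (a - b) = Circle.exp a * (Circle.exp b)⁻¹ := by
  rw [eq_mul_inv_iff_mul_eq, ← Circle.exp_add, sub_add_cancel]

lemma circle_exp_int_mul (n : ℤ) (r : ℝ) : Circle.exp ((n : ℝ) * r) = Circle.exp r ^ n := by
  induction n using Int.induction_on with
  | zero => simp
  | succ i ih =>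
    have h1 : (((i : ℤ) + 1 : ℤ) : ℝ) * r = (((i : ℤ)) : ℝ) * r + r := by push_cast; ring
    rw [h1, Circle.exp_add, ih, ← zpow_add_one]
  | pred i ih =>
    have h1 : ((-(i : ℤ) - 1 : ℤ) : ℝ) * r = ((-(i : ℤ) : ℤ) : ℝ) * r - r := by push_cast; ring
    rw [h1, circle_exp_sub, ih, ← zpow_sub_one]


lemma exists_lift_aux {X : Type} [TopologicalSpace X] (F : C(X × ℝ, Circle)) (N : ℕ) (hN : 0 < N)
    (hsmall : ∀ (x : X) (s t : ℝ), s ∈ Icc (0:ℝ) 1 → t ∈ Icc (0:ℝ) 1 → |s - t| ≤ 1 / N →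
      (F (x, s) : ℂ) ≠ -(F (x, t) : ℂ))
    (g₀ : C(X, ℝ)) (hg₀ : ∀ x, Circle.exp (g₀ x) = F (x, 0)) :
    ∃ G : C(X × ℝ, ℝ), (∀ x, G (x, 0) = g₀ x) ∧
      ∀ x t, t ∈ Icc (0:ℝ) 1 → Circle.exp (G (x, t)) = F (x, t) := by
  have hNR : (0:ℝ) < N := by exact_mod_cast hN
  set c : ℕ → ℝ → ℝ := fun j t => max ((j:ℝ)/N) (min t (((j:ℝ)+1)/N)) with hc
  have hclb : ∀ (j : ℕ) (t : ℝ), (j:ℝ)/N ≤ c j t := fun j t => le_max_left _ _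
  have hcub : ∀ (j : ℕ) (t : ℝ), c j t ≤ ((j:ℝ)+1)/N := by
    intro j t
    exact max_le ((div_le_div_iff_of_pos_right hNR).mpr (by linarith)) (min_le_right _ _)
  have hc01 : ∀ (j : ℕ) (t : ℝ), j + 1 ≤ N → c j t ∈ Icc (0:ℝ) 1 := by
    intro j t hj
    refine ⟨le_trans (by positivity) (hclb j t), le_trans (hcub j t) ?_⟩
    rw [div_le_one hNR]
    exact_mod_cast hj
  have hjN01 : ∀ j : ℕ, j + 1 ≤ N → ((j:ℝ)/N) ∈ Icc (0:ℝ) 1 := by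
    intro j hj
    refine ⟨by positivity, ?_⟩
    rw [div_le_one hNR]
    have : (j:ℝ) ≤ (j:ℝ) + 1 := by linarith
    refine le_trans this ?_
    exact_mod_cast hj
  have hgap : ∀ (j : ℕ) (t : ℝ), |c j t - (j:ℝ)/N| ≤ 1/N := by
    intro j t
    rw [abs_le]
    have h1 := hclb j t
    have h2 := hcub j t
    have h3 : ((j:ℝ)+1)/N - (j:ℝ)/N = 1/N := by ring
    constructor <;> [linarith [one_div_pos.mpr hNR]; linarith]
  set w : ℕ → X × ℝ → Circle := fun j p => F (p.1, c j p.2) * (F (p.1, (j:ℝ)/N))⁻¹ with hw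
  have hwne : ∀ (j : ℕ) (p : X × ℝ), j + 1 ≤ N → ((w j p : ℂ)) ≠ -1 := by
    intro j p hj heq
    apply hsmall p.1 (c j p.2) ((j:ℝ)/N) (hc01 j p.2 hj) (hjN01 j hj) (hgap j p.2)
    have hb : ((F (p.1, (j:ℝ)/N) : ℂ)) ≠ 0 := Circle.coe_ne_zero _
    rw [hw] at heq
    simp only [Circle.coe_mul, Circle.coe_inv] at heq
    field_simp at heq
    linear_combination heq
  have hwcont : ∀ j, Continuous (w j) := by
    intro j
    apply Continuous.mul
    · exact F.continuous.comp (continuous_fst.prodMk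
        (continuous_const.max (continuous_snd.min continuous_const)))
    · exact (F.continuous.comp (continuous_fst.prodMk continuous_const)).inv
  set term : ℕ → X × ℝ → ℝ := fun j p => Complex.arg (w j p) with hterm
  have htermcont : ∀ j, j + 1 ≤ N → Continuous (term j) := by
    intro j hj
    rw [continuous_iff_continuousAt]
    intro p
    have h1 : ContinuousAt Complex.arg ((w j p : ℂ)) :=
      Complex.continuousAt_arg (mem_slitPlane_of_ne_neg_one (hwne j p hj))
    exact Filter.Tendsto.comp h1 ((continuous_subtype_val.comp (hwcont j)).continuousAt (x := p))
  have hwdef : ∀ (j : ℕ) (p : X × ℝ), w j p = F (p.1, c j p.2) * (F (p.1, (j:ℝ)/N))⁻¹ :=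
    fun _ _ => rfl
  have hexpterm : ∀ (j : ℕ) (p : X × ℝ), Circle.exp (term j p) = w j p := fun j p => Circle.exp_arg _
  set Gfun : X × ℝ → ℝ := fun p => g₀ p.1 + ∑ j ∈ Finset.range N, term j p with hG
  have hGcont : Continuous Gfun := by
    apply (g₀.continuous.comp continuous_fst).add
    apply continuous_finset_sum
    intro j hj
    exact htermcont j (Finset.mem_range.mp hj)
  refine ⟨⟨Gfun, hGcont⟩, ?_, ?_⟩
  · intro x
    simp only [ContinuousMap.coe_mk, hG]
    have hz : ∀ j ∈ Finset.range N, term j (x, 0) = 0 := by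
      intro j hj
      have hc0 : c j (0:ℝ) = (j:ℝ)/N := by
        show max ((j:ℝ)/N) (min (0:ℝ) (((j:ℝ)+1)/N)) = (j:ℝ)/N
        rw [min_eq_left (by positivity), max_eq_left (by positivity)]
      have hw1 : w j ((x, (0:ℝ))) = 1 := by
        rw [hw]
        simp only [hc0]
        exact mul_inv_cancel _
      rw [hterm]
      simp only [hw1, Circle.coe_one, Complex.arg_one]
    rw [Finset.sum_congr rfl hz]
    simp
  · intro x t ht
    have key : ∀ m, m ≤ N →
        Circle.exp (g₀ x + ∑ j ∈ Finset.range m, term j (x, t)) = F (x, min t ((m:ℝ)/N)) := by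
      intro m
      induction m with
      | zero =>
        intro _
        simp only [Finset.range_zero, Finset.sum_empty, add_zero, Nat.cast_zero, zero_div]
        rw [min_eq_right ht.1]
        exact hg₀ x
      | succ m ih =>
        intro hm
        have hm' : m ≤ N := Nat.le_of_succ_le hm
        have hmN : m + 1 ≤ N := hm
        rw [Finset.sum_range_succ, ← add_assoc, Circle.exp_add, ih hm', hexpterm, hwdef]
        have hmono : ((m:ℝ))/N ≤ ((m:ℝ)+1)/N := (div_le_div_iff_of_pos_right hNR).mpr (by linarith)
        have hcast : ((m+1 : ℕ):ℝ) = (m:ℝ) + 1 := by push_cast; ring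
        rcases le_total t ((m:ℝ)/N) with hle | hle
        · have h1 : min t ((m:ℝ)/N) = t := min_eq_left hle
          have h2 : min t (((m:ℝ)+1)/N) = t := min_eq_left (le_trans hle hmono)
          have h3 : c m t = (m:ℝ)/N := by
            show max ((m:ℝ)/N) (min t (((m:ℝ)+1)/N)) = (m:ℝ)/N
            rw [h2, max_eq_left hle]
          rw [h1, h3, mul_inv_cancel, mul_one, hcast, h2]
        · have h1 : min t ((m:ℝ)/N) = (m:ℝ)/N := min_eq_right hle
          have h3 : c m t = min t (((m:ℝ)+1)/N) :=
            max_eq_right (le_min hle hmono)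
          rw [h1, h3, mul_comm, mul_assoc, inv_mul_cancel, mul_one, hcast]
    have hfin := key N le_rfl
    rw [div_self (ne_of_gt hNR), min_eq_left ht.2] at hfin
    exact hfin


set_option maxHeartbeats 1000000 in
lemma exists_small {X : Type} [MetricSpace X] [CompactSpace X] (F : C(X × ℝ, Circle)) :
    ∃ N : ℕ, 0 < N ∧ ∀ (x : X) (s t : ℝ), s ∈ Icc (0:ℝ) 1 → t ∈ Icc (0:ℝ) 1 → |s - t| ≤ 1 / N →
      (F (x, s) : ℂ) ≠ -(F (x, t) : ℂ) := by
  have hK : IsCompact ((univ : Set X) ×ˢ Icc (0:ℝ) 1) := isCompact_univ.prod isCompact_Icc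
  have hu := hK.uniformContinuousOn_of_continuous F.continuous.continuousOn
  replace hu := Metric.uniformContinuousOn_iff.mp hu
  obtain ⟨δ, hδ, hu⟩ := hu 2 (by norm_num)
  obtain ⟨n, hn⟩ := exists_nat_one_div_lt hδ
  refine ⟨n + 1, Nat.succ_pos n, ?_⟩
  intro x s t hs htm habs heq
  have h1 : ((x, s) : X × ℝ) ∈ (univ : Set X) ×ˢ Icc (0:ℝ) 1 := ⟨mem_univ _, hs⟩
  have h2 : ((x, t) : X × ℝ) ∈ (univ : Set X) ×ˢ Icc (0:ℝ) 1 := ⟨mem_univ _, htm⟩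
  have hd : dist ((x, s) : X × ℝ) (x, t) < δ := by
    rw [Prod.dist_eq]
    have hds : dist s t = |s - t| := Real.dist_eq s t
    have hcast : ((n + 1 : ℕ) : ℝ) = (n : ℝ) + 1 := by push_cast; ring
    rw [hcast] at habs
    have : dist s t < δ := by rw [hds]; exact lt_of_le_of_lt habs hn
    simp only [dist_self]
    exact max_lt hδ this
  have hlt : dist (F (x, s) : ℂ) (F (x, t) : ℂ) < 2 := hu _ h1 _ h2 hd
  rw [Complex.dist_eq, heq] at hlt
  have habs2 : ‖(-(F (x, t) : ℂ) - (F (x, t) : ℂ))‖ = 2 := by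
    have he : -(F (x, t) : ℂ) - (F (x, t) : ℂ) = -(2 * (F (x, t) : ℂ)) := by ring
    rw [he, norm_neg, norm_mul, Circle.norm_coe, mul_one, Complex.norm_two]
  rw [habs2] at hlt
  exact lt_irrefl _ hlt


end TorusMono

open TorusMono in
/-- Every continuous map `f : 𝕋 × 𝕋 → 𝕋` from the 2-torus to the circle
is homotopic to a map of the form `(z₁, z₂) ↦ z₁^k · z₂^l` for some integers `k` and `l`. -/
theorem torus_to_circle_homotopic_to_monomial (f : C(Circle × Circle, Circle)) :
    ∃ k l : ℤ, f.Homotopic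
      ⟨fun p : Circle × Circle => p.1 ^ k * p.2 ^ l, by fun_prop⟩ := by
  classical
  set qc : C(ℝ, Circle) := ⟨fun t => Circle.exp (2 * π * t),
    Circle.exp.continuous.comp (continuous_const.mul continuous_id)⟩ with hqcdef
  have hq0 : qc 0 = 1 := by show Circle.exp (2 * π * 0) = 1; rw [mul_zero, Circle.exp_zero]
  have hq1 : qc 1 = 1 := by show Circle.exp (2 * π * 1) = 1; rw [mul_one, Circle.exp_two_pi]
  set sc : Circle → ℝ := fun z => Int.fract (Complex.arg ↑z / (2 * π)) with hscdef
  have hs_mem : ∀ z, sc z ∈ Ico (0:ℝ) 1 := fun z => ⟨Int.fract_nonneg _, Int.fract_lt_one _⟩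
  have h2π : (2 * π) ≠ 0 := by positivity
  have hqs : ∀ z, qc (sc z) = z := by
    intro z
    show Circle.exp (2 * π * Int.fract (Complex.arg ↑z / (2 * π))) = z
    have h1 : 2 * π * Int.fract (Complex.arg ↑z / (2 * π))
        = Complex.arg ↑z + ((-⌊Complex.arg ↑z / (2 * π)⌋ : ℤ) : ℝ) * (2 * π) := by
      rw [Int.fract]
      push_cast
      field_simp
      ring
    calc Circle.exp (2 * π * Int.fract (Complex.arg ↑z / (2 * π)))
        = Circle.exp (Complex.arg ↑z) := Circle.exp_eq_exp.mpr ⟨_, h1⟩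
      _ = z := Circle.exp_arg z
  have hqsurj : Function.Surjective (qc : ℝ → Circle) := fun z => ⟨sc z, hqs z⟩
  haveI hconn : ConnectedSpace Circle := hqsurj.connectedSpace qc.continuous
  have hsq : ∀ t ∈ Icc (0:ℝ) 1, sc (qc t) = t ∨ (t = 1 ∧ sc (qc t) = 0) := by
    intro t ht
    obtain ⟨m, hm⟩ := Circle.exp_eq_exp.mp
      (show Circle.exp (2 * π * (sc (qc t))) = Circle.exp (2 * π * t) from hqs (qc t))
    have hπ : (0:ℝ) < 2 * π := by positivity
    have hu1 : 0 ≤ sc (qc t) := (hs_mem _).1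
    have hu2 : sc (qc t) < 1 := (hs_mem _).2
    have hmu : sc (qc t) = t + m := by
      apply mul_left_cancel₀ (ne_of_gt hπ)
      rw [mul_add]
      linarith
    have hm1 : (-1:ℤ) ≤ m := by
      have : (-1:ℝ) ≤ (m:ℝ) := by
        have : (m:ℝ) = sc (qc t) - t := by linarith
        rw [this]; linarith [ht.2]
      exact_mod_cast this
    have hm2 : m < 1 := by
      have : (m:ℝ) < 1 := by
        have : (m:ℝ) = sc (qc t) - t := by linarith
        rw [this]; linarith [ht.1]
      exact_mod_cast this
    have hm0 : m = 0 ∨ m = -1 := by omega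
    rcases hm0 with h | h
    · left; rw [hmu, h]; push_cast; ring
    · right
      have ht1 : t = 1 := by
        have : sc (qc t) = t - 1 := by rw [hmu, h]; push_cast; ring
        have := this ▸ hu1
        exact le_antisymm ht.2 (by linarith)
      refine ⟨ht1, ?_⟩
      rw [hmu, h, ht1]; push_cast; ring
  -- Step A : degrees of the two coordinate loops
  set F₁ : C(Circle × ℝ, Circle) := ⟨fun p => f (qc p.2, 1),
    f.continuous.comp ((qc.continuous.comp continuous_snd).prodMk continuous_const)⟩ with hF₁def
  obtain ⟨N₁, hN₁pos, hs₁⟩ := exists_small F₁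
  obtain ⟨G₁, hG₁0, hG₁⟩ := exists_lift_aux F₁ N₁ hN₁pos hs₁
    (ContinuousMap.const Circle (Complex.arg ((f (1, 1) : Circle))))
    (fun x => by show Circle.exp _ = f (qc 0, 1); rw [hq0]; exact Circle.exp_arg _)
  set A₁ : ℝ → ℝ := fun t => G₁ (1, t) with hA₁def
  have hA₁ : ∀ t ∈ Icc (0:ℝ) 1, Circle.exp (A₁ t) = f (qc t, 1) := fun t ht => hG₁ 1 t ht
  have hA₁cont : Continuous A₁ := G₁.continuous.comp (continuous_const.prodMk continuous_id)
  obtain ⟨k, hk⟩ : ∃ m : ℤ, A₁ 1 = A₁ 0 + (m:ℝ) * (2 * π) := Circle.exp_eq_exp.mp (by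
    rw [hA₁ 1 ⟨zero_le_one, le_rfl⟩, hA₁ 0 ⟨le_rfl, zero_le_one⟩, hq0, hq1])
  set F₂ : C(Circle × ℝ, Circle) := ⟨fun p => f (1, qc p.2),
    f.continuous.comp (continuous_const.prodMk (qc.continuous.comp continuous_snd))⟩ with hF₂def
  obtain ⟨N₂, hN₂pos, hs₂⟩ := exists_small F₂
  obtain ⟨G₁', hG₁'0, hG₁'⟩ := exists_lift_aux F₂ N₂ hN₂pos hs₂
    (ContinuousMap.const Circle (Complex.arg ((f (1, 1) : Circle))))
    (fun x => by show Circle.exp _ = f (1, qc 0); rw [hq0]; exact Circle.exp_arg _)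
  set A₂ : ℝ → ℝ := fun t => G₁' (1, t) with hA₂def
  have hA₂ : ∀ t ∈ Icc (0:ℝ) 1, Circle.exp (A₂ t) = f (1, qc t) := fun t ht => hG₁' 1 t ht
  have hA₂cont : Continuous A₂ := G₁'.continuous.comp (continuous_const.prodMk continuous_id)
  obtain ⟨l, hl⟩ : ∃ m : ℤ, A₂ 1 = A₂ 0 + (m:ℝ) * (2 * π) := Circle.exp_eq_exp.mp (by
    rw [hA₂ 1 ⟨zero_le_one, le_rfl⟩, hA₂ 0 ⟨le_rfl, zero_le_one⟩, hq0, hq1])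
  -- the "corrected" map g with zero degrees
  set g : C(Circle × Circle, Circle) := ⟨fun p => f p * p.1 ^ (-k) * p.2 ^ (-l),
    (f.continuous.mul ((continuous_zpow (-k)).comp continuous_fst)).mul
      ((continuous_zpow (-l)).comp continuous_snd)⟩ with hgdef
  -- lift of z ↦ g (z, 1)
  set val : ℝ → ℝ := fun t => A₁ t - (k:ℝ) * (2 * π * t) with hvaldef
  have hvalcont : Continuous val :=
    hA₁cont.sub (continuous_const.mul (continuous_const.mul continuous_id))
  have hval : ∀ t ∈ Icc (0:ℝ) 1, Circle.exp (val t) = g (qc t, 1) := by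
    intro t ht
    show Circle.exp (A₁ t - (k:ℝ) * (2 * π * t)) = f (qc t, 1) * (qc t) ^ (-k) * (1:Circle) ^ (-l)
    rw [circle_exp_sub, hA₁ t ht, circle_exp_int_mul, one_zpow, mul_one, zpow_neg]
    rfl
  have hval01 : val 1 = val 0 := by
    show A₁ 1 - (k:ℝ) * (2 * π * 1) = A₁ 0 - (k:ℝ) * (2 * π * 0)
    rw [hk]; ring
  set g₀c : Circle → ℝ := fun z => val (sc z) with hg₀cdef
  set QI : unitInterval → Circle := fun t => qc ↑t with hQIdef
  have hQIc : Continuous QI := qc.continuous.comp continuous_subtype_val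
  have hQIsurj : Function.Surjective QI :=
    fun z => ⟨⟨sc z, ⟨(hs_mem z).1, le_of_lt (hs_mem z).2⟩⟩, hqs z⟩
  have hQIquot : IsQuotientMap QI := (hQIc.isClosedMap).isQuotientMap hQIc hQIsurj
  have hg₀fib : ∀ t : unitInterval, g₀c (QI t) = val ↑t := by
    intro t
    rcases hsq ↑t t.2 with h | ⟨h1, h2⟩
    · show val (sc (qc ↑t)) = val ↑t
      rw [h]
    · show val (sc (qc ↑t)) = val ↑t
      rw [h2, h1]
      exact hval01.symm
  have hg₀cont : Continuous g₀c := by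
    rw [hQIquot.continuous_iff]
    have he : (g₀c ∘ QI) = fun t : unitInterval => val ↑t := funext hg₀fib
    rw [he]
    exact hvalcont.comp continuous_subtype_val
  have hg₀lift : ∀ z, Circle.exp (g₀c z) = g (z, 1) := by
    intro z
    have hmem : sc z ∈ Icc (0:ℝ) 1 := ⟨(hs_mem z).1, le_of_lt (hs_mem z).2⟩
    show Circle.exp (val (sc z)) = g (z, 1)
    rw [hval _ hmem, hqs]
  -- Step C : lift g over the whole torus
  set F₃ : C(Circle × ℝ, Circle) := ⟨fun p => g (p.1, qc p.2),
    g.continuous.comp (continuous_fst.prodMk (qc.continuous.comp continuous_snd))⟩ with hF₃def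
  obtain ⟨N₃, hN₃pos, hs₃⟩ := exists_small F₃
  obtain ⟨G₂, hG₂0, hG₂⟩ := exists_lift_aux F₃ N₃ hN₃pos hs₃ ⟨g₀c, hg₀cont⟩
    (fun z => by show Circle.exp (g₀c z) = g (z, qc 0); rw [hq0]; exact hg₀lift z)
  have hρint : ∀ z : Circle, ∃ n : ℤ, G₂ (z, 1) - G₂ (z, 0) = (n:ℝ) * (2 * π) := by
    intro z
    have h1 : Circle.exp (G₂ (z, 1)) = Circle.exp (G₂ (z, 0)) := by
      rw [hG₂ z 1 ⟨zero_le_one, le_rfl⟩, hG₂ z 0 ⟨le_rfl, zero_le_one⟩]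
      show g (z, qc 1) = g (z, qc 0)
      rw [hq0, hq1]
    obtain ⟨n, hn⟩ := Circle.exp_eq_exp.mp h1
    exact ⟨n, by linarith⟩
  have hρcont : Continuous fun z : Circle => G₂ (z, 1) - G₂ (z, 0) :=
    (G₂.continuous.comp (continuous_id.prodMk continuous_const)).sub
      (G₂.continuous.comp (continuous_id.prodMk continuous_const))
  have hρ : ∀ z : Circle, G₂ (z, 1) - G₂ (z, 0) = G₂ (1, 1) - G₂ (1, 0) :=
    fun z => const_of_int hρcont hρint z 1
  have hBC : ∀ t ∈ Icc (0:ℝ) 1,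
      ∃ n : ℤ, (G₂ (1, t) - (A₂ t - (l:ℝ) * (2 * π * t))) = (n:ℝ) * (2 * π) := by
    intro t ht
    have h1 : Circle.exp (G₂ (1, t)) = g (1, qc t) := hG₂ 1 t ht
    have h2 : Circle.exp (A₂ t - (l:ℝ) * (2 * π * t)) = g (1, qc t) := by
      show Circle.exp (A₂ t - (l:ℝ) * (2 * π * t))
          = f (1, qc t) * (1:Circle) ^ (-k) * (qc t) ^ (-l)
      rw [circle_exp_sub, hA₂ t ht, circle_exp_int_mul, one_zpow, mul_one, zpow_neg]
      rfl
    obtain ⟨n, hn⟩ := Circle.exp_eq_exp.mp (h1.trans h2.symm)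
    exact ⟨n, by linarith⟩
  have hBCcont : Continuous fun t : ℝ => G₂ (1, t) - (A₂ t - (l:ℝ) * (2 * π * t)) :=
    (G₂.continuous.comp (continuous_const.prodMk continuous_id)).sub
      (hA₂cont.sub (continuous_const.mul (continuous_const.mul continuous_id)))
  have hD := const_of_int_Icc (ψ := fun t => G₂ (1, t) - (A₂ t - (l:ℝ) * (2 * π * t)))
    hBCcont.continuousOn hBC
  have hρ10 : G₂ (1, 1) - G₂ (1, 0) = 0 := by
    simp only [mul_zero, mul_one, sub_zero] at hD
    linarith [hD, hl]
  have hper : ∀ z : Circle, G₂ (z, 1) = G₂ (z, 0) := by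
    intro z
    have h1 := hρ z
    rw [hρ10] at h1
    linarith
  set φ : Circle × Circle → ℝ := fun p => G₂ (p.1, sc p.2) with hφdef
  have hφlift : ∀ p : Circle × Circle, Circle.exp (φ p) = g p := by
    intro p
    have hmem : sc p.2 ∈ Icc (0:ℝ) 1 := ⟨(hs_mem p.2).1, le_of_lt (hs_mem p.2).2⟩
    show Circle.exp (G₂ (p.1, sc p.2)) = g p
    rw [hG₂ p.1 (sc p.2) hmem]
    show g (p.1, qc (sc p.2)) = g p
    rw [hqs]
  have hφcont : Continuous φ := by
    have hPc : Continuous (fun zt : Circle × unitInterval => (zt.1, QI zt.2)) :=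
      continuous_fst.prodMk (hQIc.comp continuous_snd)
    have hPsurj : Function.Surjective (fun zt : Circle × unitInterval => (zt.1, QI zt.2)) := by
      intro p
      refine ⟨(p.1, ⟨sc p.2, ⟨(hs_mem p.2).1, le_of_lt (hs_mem p.2).2⟩⟩), ?_⟩
      exact Prod.ext rfl (hqs p.2)
    have hPquot : IsQuotientMap (fun zt : Circle × unitInterval => (zt.1, QI zt.2)) :=
      (hPc.isClosedMap).isQuotientMap hPc hPsurj
    rw [hPquot.continuous_iff]
    have he : (φ ∘ fun zt : Circle × unitInterval => (zt.1, QI zt.2))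
        = fun zt : Circle × unitInterval => G₂ (zt.1, (zt.2 : ℝ)) := by
      funext zt
      show G₂ (zt.1, sc (qc ↑zt.2)) = G₂ (zt.1, (zt.2 : ℝ))
      rcases hsq ↑zt.2 zt.2.2 with h | ⟨h1, h2⟩
      · rw [h]
      · rw [h2, h1]
        exact (hper _).symm
    rw [he]
    exact G₂.continuous.comp (continuous_fst.prodMk (continuous_subtype_val.comp continuous_snd))
  -- the homotopy
  refine ⟨k, l, ⟨⟨⟨fun p => Circle.exp ((1 - (p.1 : ℝ)) * φ p.2) * (p.2.1 ^ k * p.2.2 ^ l),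
    ?_⟩, ?_, ?_⟩⟩⟩
  · exact (Circle.exp.continuous.comp
      ((continuous_const.sub (continuous_subtype_val.comp continuous_fst)).mul
        (hφcont.comp continuous_snd))).mul
      (((continuous_zpow k).comp (continuous_fst.comp continuous_snd)).mul
        ((continuous_zpow l).comp (continuous_snd.comp continuous_snd)))
  · intro p
    show Circle.exp ((1 - ((0 : unitInterval) : ℝ)) * φ p) * (p.1 ^ k * p.2 ^ l) = f p
    rw [Set.Icc.coe_zero, sub_zero, one_mul, hφlift p]
    show (f p * p.1 ^ (-k) * p.2 ^ (-l)) * (p.1 ^ k * p.2 ^ l) = f p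
    rw [zpow_neg, zpow_neg, ← mul_assoc,
      mul_right_comm (f p * (p.1 ^ k)⁻¹) ((p.2 ^ l)⁻¹) (p.1 ^ k),
      inv_mul_cancel_right, inv_mul_cancel_right]
  · intro p
    show Circle.exp ((1 - ((1 : unitInterval) : ℝ)) * φ p) * (p.1 ^ k * p.2 ^ l)
        = p.1 ^ k * p.2 ^ l
    rw [Set.Icc.coe_one, sub_self, zero_mul, Circle.exp_zero, one_mul]
end
end

section
/- Let n ≥ 2 and let Hₙ be the group presented by generators g₁, …, gₙ and f_{ij} for 1 ≤ i < j ≤ n, with relations gᵢgⱼ = f_{ij}gⱼgᵢ for all 1 ≤ i < j ≤ n and with each f_{ij} commuting with all generators. Then the center of Hₙ equals the subgroup Zₙ generated by the elements f_{ij}, 1 ≤ i < j ≤ n, and this subgroup is a free abelian group of rank n(n−1)/2, i.e., Zₙ ≅ ℤ^{n(n−1)/2}. -/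
/-- Index type for the pairs `1 ≤ i < j ≤ n`. -/
abbrev HeisenbergPairs (n : ℕ) := {p : Fin n × Fin n // p.1 < p.2}

/-- Generators of the group `Hₙ`: the `gᵢ` (left summand) and the `f_{ij}` (right summand). -/
abbrev HeisenbergGen (n : ℕ) := Fin n ⊕ HeisenbergPairs n

/-- Relations of `Hₙ`: `gᵢgⱼgᵢ⁻¹gⱼ⁻¹f_{ij}⁻¹` for `i < j`, together with the commutators of
each `f_{ij}` with every generator. -/
def heisenbergRels (n : ℕ) : Set (FreeGroup (HeisenbergGen n)) :=
  {r | (∃ p : HeisenbergPairs n,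
        r = FreeGroup.of (Sum.inl p.1.1) * FreeGroup.of (Sum.inl p.1.2) *
          (FreeGroup.of (Sum.inl p.1.1))⁻¹ * (FreeGroup.of (Sum.inl p.1.2))⁻¹ *
          (FreeGroup.of (Sum.inr p))⁻¹) ∨
      (∃ (p : HeisenbergPairs n) (s : HeisenbergGen n),
        r = FreeGroup.of (Sum.inr p) * FreeGroup.of s *
          (FreeGroup.of (Sum.inr p))⁻¹ * (FreeGroup.of s)⁻¹)}

/-- The group `Hₙ`, presented by generators `g₁, …, gₙ, f_{ij}` with relations
`gᵢgⱼ = f_{ij}gⱼgᵢ` (for `i < j`) and each `f_{ij}` central. -/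
def HeisenbergGroup (n : ℕ) := PresentedGroup (heisenbergRels n)

instance (n : ℕ) : Group (HeisenbergGroup n) := by unfold HeisenbergGroup; infer_instance

/-- The subgroup `Zₙ` of `Hₙ` generated by the elements `f_{ij}`, `1 ≤ i < j ≤ n`. -/
def heisenbergCenterSubgroup (n : ℕ) : Subgroup (HeisenbergGroup n) :=
  Subgroup.closure
    (Set.range fun p : HeisenbergPairs n =>
      (PresentedGroup.of (Sum.inr p) : PresentedGroup (heisenbergRels n)))

namespace HeisenbergAux

@[ext] structure Model (n : ℕ) where
  a : Fin n → ℤ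
  c : HeisenbergPairs n → ℤ

namespace Model
variable {n : ℕ}

instance : Mul (Model n) :=
  ⟨fun x y => ⟨x.a + y.a, fun p => x.c p + y.c p - x.a p.1.2 * y.a p.1.1⟩⟩
instance : One (Model n) := ⟨⟨0, 0⟩⟩
instance : Inv (Model n) :=
  ⟨fun x => ⟨-x.a, fun p => -x.c p - x.a p.1.2 * x.a p.1.1⟩⟩

@[simp] lemma mul_a (x y : Model n) : (x * y).a = x.a + y.a := rfl
@[simp] lemma mul_c (x y : Model n) (p : HeisenbergPairs n) :
    (x * y).c p = x.c p + y.c p - x.a p.1.2 * y.a p.1.1 := rfl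
@[simp] lemma one_a : (1 : Model n).a = 0 := rfl
@[simp] lemma one_c : (1 : Model n).c = 0 := rfl
@[simp] lemma inv_a (x : Model n) : x⁻¹.a = -x.a := rfl
@[simp] lemma inv_c (x : Model n) (p : HeisenbergPairs n) :
    x⁻¹.c p = -x.c p - x.a p.1.2 * x.a p.1.1 := rfl

instance : Group (Model n) where
  mul_assoc x y z := by
    ext p
    · simp [add_assoc]
    · simp; ring
  one_mul x := by ext p <;> simp
  mul_one x := by ext p <;> simp
  inv_mul_cancel x := by
    ext p
    · simp
    · simp; ring

lemma central_comm (c : HeisenbergPairs n → ℤ) (y : Model n) :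
    (⟨0, c⟩ : Model n) * y = y * ⟨0, c⟩ := by
  ext p
  · simp [add_comm]
  · simp; ring

end Model

def genMap (n : ℕ) : HeisenbergGen n → Model n
  | Sum.inl i => ⟨Pi.single i 1, 0⟩
  | Sum.inr p => ⟨0, Pi.single p 1⟩

lemma rels_hold (n : ℕ) : ∀ r ∈ heisenbergRels n, FreeGroup.lift (genMap n) r = 1 := by
  rintro r (⟨p, rfl⟩ | ⟨p, s, rfl⟩)
  · simp only [map_mul, map_inv, FreeGroup.lift_apply_of, genMap]
    ext q
    · simp
    · obtain ⟨⟨i, j⟩, hij⟩ := p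
      obtain ⟨⟨u, v⟩, huv⟩ := q
      simp only [Model.mul_c, Model.inv_c, Model.mul_a, Model.inv_a, Model.one_c,
        Pi.single_apply, Pi.zero_apply, Subtype.mk.injEq, Prod.mk.injEq]
      have hij' : (i : ℕ) < j := hij
      have huv' : (u : ℕ) < v := huv
      split_ifs <;> simp_all <;> omega
  · simp only [map_mul, map_inv, FreeGroup.lift_apply_of]
    have h : genMap n (Sum.inr p) * genMap n s = genMap n s * genMap n (Sum.inr p) :=
      Model.central_comm (Pi.single p 1) (genMap n s)
    rw [h]; group


open PresentedGroup Subgroup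

def piH (n : ℕ) : HeisenbergGroup n →* Model n := PresentedGroup.toGroup (rels_hold n)

variable {n : ℕ}

@[simp] lemma piH_of (s : HeisenbergGen n) :
    piH n (PresentedGroup.of s) = genMap n s := PresentedGroup.toGroup.of _

lemma rel_one {r : FreeGroup (HeisenbergGen n)} (hr : r ∈ heisenbergRels n) :
    PresentedGroup.mk (heisenbergRels n) r = 1 :=
  (QuotientGroup.eq_one_iff _).mpr (Subgroup.subset_normalClosure hr)

lemma f_comm_gen (p : HeisenbergPairs n) (s : HeisenbergGen n) :
    (PresentedGroup.of (Sum.inr p) : HeisenbergGroup n) * PresentedGroup.of s =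
      PresentedGroup.of s * PresentedGroup.of (Sum.inr p) := by
  have h := rel_one (show _ ∈ heisenbergRels n from Or.inr ⟨p, s, rfl⟩)
  simp only [map_mul, map_inv] at h
  have h2 : (PresentedGroup.of (Sum.inr p) : HeisenbergGroup n) * PresentedGroup.of s *
      (PresentedGroup.of s * PresentedGroup.of (Sum.inr p))⁻¹ = 1 := by
    rw [mul_inv_rev, ← mul_assoc]; exact h
  exact mul_inv_eq_one.mp h2

lemma f_central (p : HeisenbergPairs n) :
    (PresentedGroup.of (Sum.inr p) : HeisenbergGroup n) ∈
      Subgroup.center (HeisenbergGroup n) := by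
  refine Subgroup.mem_center_iff.mpr fun y => ?_
  have hy : y ∈ Subgroup.centralizer {(PresentedGroup.of (Sum.inr p) : HeisenbergGroup n)} := by
    refine PresentedGroup.generated_by _ _ (fun s => ?_) y
    refine Subgroup.mem_centralizer_iff.mpr ?_
    rintro g rfl
    exact f_comm_gen p s
  exact (Subgroup.mem_centralizer_iff.mp hy _ rfl).symm

lemma Z_le_center : heisenbergCenterSubgroup n ≤ Subgroup.center (HeisenbergGroup n) := by
  refine (Subgroup.closure_le _).mpr ?_
  rintro x ⟨p, rfl⟩
  exact f_central p

instance : (heisenbergCenterSubgroup n).Normal := by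
  constructor
  intro x hx g
  have hc := Subgroup.mem_center_iff.mp (Z_le_center hx) g
  rw [hc, mul_inv_cancel_right]
  exact hx

lemma a_eq_zero_of_mem_Z {x : HeisenbergGroup n} (hx : x ∈ heisenbergCenterSubgroup n) :
    (piH n x).a = 0 := by
  refine Subgroup.closure_induction ?_ ?_ ?_ ?_ hx
  · rintro y ⟨p, rfl⟩
    simp [genMap]
  · simp
  · intro y z _ _ hy hz
    simp [hy, hz]
  · intro y _ hy
    simp [hy]

lemma comm_g_mem_lt {i j : Fin n} (h : i < j) :
    (PresentedGroup.of (Sum.inl i) : HeisenbergGroup n) * PresentedGroup.of (Sum.inl j) *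
      (PresentedGroup.of (Sum.inl i))⁻¹ * (PresentedGroup.of (Sum.inl j))⁻¹ ∈
      heisenbergCenterSubgroup n := by
  have hr := rel_one (show _ ∈ heisenbergRels n from Or.inl ⟨⟨(i, j), h⟩, rfl⟩)
  simp only [map_mul, map_inv] at hr
  have heq : (PresentedGroup.of (Sum.inl i) : HeisenbergGroup n) * PresentedGroup.of (Sum.inl j) *
      (PresentedGroup.of (Sum.inl i))⁻¹ * (PresentedGroup.of (Sum.inl j))⁻¹ =
      PresentedGroup.of (Sum.inr ⟨(i, j), h⟩) := by
    rw [mul_inv_eq_one] at hr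
    exact hr
  refine (congrArg (· ∈ heisenbergCenterSubgroup n) heq).mpr ?_
  exact Subgroup.subset_closure ⟨_, rfl⟩

lemma comm_g_mem (i j : Fin n) :
    (PresentedGroup.of (Sum.inl i) : HeisenbergGroup n) * PresentedGroup.of (Sum.inl j) *
      (PresentedGroup.of (Sum.inl i))⁻¹ * (PresentedGroup.of (Sum.inl j))⁻¹ ∈
      heisenbergCenterSubgroup n := by
  rcases lt_trichotomy i j with h | rfl | h
  · exact comm_g_mem_lt h
  · have : (PresentedGroup.of (Sum.inl i) : HeisenbergGroup n) * PresentedGroup.of (Sum.inl i) *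
        (PresentedGroup.of (Sum.inl i))⁻¹ * (PresentedGroup.of (Sum.inl i))⁻¹ = 1 := by group
    refine (congrArg (· ∈ heisenbergCenterSubgroup n) this).mpr ?_; exact one_mem _
  · have hmem := comm_g_mem_lt h
    have : (PresentedGroup.of (Sum.inl i) : HeisenbergGroup n) * PresentedGroup.of (Sum.inl j) *
        (PresentedGroup.of (Sum.inl i))⁻¹ * (PresentedGroup.of (Sum.inl j))⁻¹ =
        (PresentedGroup.of (Sum.inl j) * PresentedGroup.of (Sum.inl i) *
        (PresentedGroup.of (Sum.inl j))⁻¹ * (PresentedGroup.of (Sum.inl i))⁻¹)⁻¹ := by group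
    refine (congrArg (· ∈ heisenbergCenterSubgroup n) this).mpr ?_
    exact inv_mem hmem

abbrev Q (n : ℕ) := HeisenbergGroup n ⧸ heisenbergCenterSubgroup n

def qmk (n : ℕ) : HeisenbergGroup n →* Q n := QuotientGroup.mk' _

lemma qmk_eq_one {x : HeisenbergGroup n} (hx : x ∈ heisenbergCenterSubgroup n) :
    qmk n x = 1 :=
  (QuotientGroup.eq_one_iff x).mpr hx

lemma gen_comm_Q (s t : HeisenbergGen n) :
    qmk n (PresentedGroup.of s) * qmk n (PresentedGroup.of t) =
      qmk n (PresentedGroup.of t) * qmk n (PresentedGroup.of s) := by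
  match s, t with
  | Sum.inr p, t =>
    exact (map_mul (qmk n) _ _).symm.trans ((congrArg (qmk n) (f_comm_gen p t)).trans (map_mul (qmk n) _ _))
  | s, Sum.inr p =>
    exact (map_mul (qmk n) _ _).symm.trans ((congrArg (qmk n) (f_comm_gen p s)).symm.trans (map_mul (qmk n) _ _))
  | Sum.inl i, Sum.inl j =>
    have hc := comm_g_mem i j
    have hw : (PresentedGroup.of (Sum.inl i) : HeisenbergGroup n) * PresentedGroup.of (Sum.inl j) =
        (PresentedGroup.of (Sum.inl i) * PresentedGroup.of (Sum.inl j) *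
          (PresentedGroup.of (Sum.inl i))⁻¹ * (PresentedGroup.of (Sum.inl j))⁻¹) *
        (PresentedGroup.of (Sum.inl j) * PresentedGroup.of (Sum.inl i)) := by group
    exact (map_mul (qmk n) _ _).symm.trans ((congrArg (qmk n) hw).trans ((map_mul (qmk n) _ _).trans
      ((congrArg (· * qmk n _) (qmk_eq_one hc)).trans ((one_mul _).trans (map_mul (qmk n) _ _)))))

lemma mk_of_mem_center (s : HeisenbergGen n) :
    qmk n (PresentedGroup.of s) ∈ Subgroup.center (Q n) := by
  refine Subgroup.mem_center_iff.mpr fun g => ?_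
  obtain ⟨y, rfl⟩ := QuotientGroup.mk'_surjective _ g
  have hy : y ∈ Subgroup.comap (qmk n)
      (Subgroup.centralizer {qmk n (PresentedGroup.of s)}) := by
    refine PresentedGroup.generated_by _ _ (fun t => ?_) y
    refine Subgroup.mem_comap.mpr (Subgroup.mem_centralizer_iff.mpr ?_)
    rintro g rfl
    exact gen_comm_Q s t
  exact (Subgroup.mem_centralizer_iff.mp (Subgroup.mem_comap.mp hy) _ rfl).symm

lemma Q_mul_comm (x y : Q n) : x * y = y * x := by
  obtain ⟨a, rfl⟩ := QuotientGroup.mk'_surjective _ x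
  have ha : a ∈ Subgroup.comap (qmk n) (Subgroup.center (Q n)) :=
    PresentedGroup.generated_by _ _ (fun t => Subgroup.mem_comap.mpr (mk_of_mem_center t)) a
  exact (Subgroup.mem_center_iff.mp (Subgroup.mem_comap.mp ha) y).symm

instance : CommGroup (Q n) :=
  { (inferInstance : Group (Q n)) with mul_comm := Q_mul_comm }

def fstHom (n : ℕ) : Model n →* Multiplicative (Fin n → ℤ) where
  toFun x := Multiplicative.ofAdd x.a
  map_one' := by simp
  map_mul' x y := by simp [Model.mul_a]

def alphaH (n : ℕ) : HeisenbergGroup n →* Multiplicative (Fin n → ℤ) :=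
  (fstHom n).comp (piH n)

lemma alphaH_of_mem_Z {x : HeisenbergGroup n} (hx : x ∈ heisenbergCenterSubgroup n) :
    alphaH n x = 1 := by
  have := a_eq_zero_of_mem_Z hx
  simp only [alphaH, MonoidHom.comp_apply, fstHom, MonoidHom.coe_mk, OneHom.coe_mk, this]
  rfl

def betaH (n : ℕ) : Q n →* Multiplicative (Fin n → ℤ) :=
  QuotientGroup.lift _ (alphaH n) (fun _ hx => alphaH_of_mem_Z hx)

noncomputable def gammaH (n : ℕ) (a : Fin n → ℤ) : Q n :=
  ∏ i : Fin n, (qmk n (PresentedGroup.of (Sum.inl i))) ^ (a i)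

lemma betaH_gammaH (a : Fin n → ℤ) : betaH n (gammaH n a) = Multiplicative.ofAdd a := by
  rw [gammaH, map_prod]
  have h1 : ∀ i : Fin n, betaH n ((qmk n (PresentedGroup.of (Sum.inl i))) ^ (a i)) =
      Multiplicative.ofAdd (a i • Pi.single i 1) := by
    intro i
    rw [map_zpow]
    have : betaH n (qmk n (PresentedGroup.of (Sum.inl i))) =
        Multiplicative.ofAdd (Pi.single i (1 : ℤ)) := by
      show alphaH n (PresentedGroup.of (Sum.inl i)) = _
      simp [alphaH, fstHom, genMap]
      exact congrArg (fun m => Multiplicative.ofAdd m.a) (piH_of (Sum.inl i))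
    rw [this, ofAdd_zsmul]
  simp_rw [h1]
  rw [← ofAdd_sum]
  congr 1
  funext j
  simp [Finset.sum_apply, Pi.single_apply, Finset.sum_ite_eq']

lemma gammaH_add (a b : Fin n → ℤ) : gammaH n (a + b) = gammaH n a * gammaH n b := by
  rw [gammaH, gammaH, gammaH, ← Finset.prod_mul_distrib]
  exact Finset.prod_congr rfl fun i _ => by rw [Pi.add_apply, zpow_add]

lemma gammaH_zero : gammaH n 0 = 1 := by simp [gammaH]

lemma gammaH_neg (a : Fin n → ℤ) : gammaH n (-a) = (gammaH n a)⁻¹ := by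
  rw [eq_inv_iff_mul_eq_one, ← gammaH_add, neg_add_cancel, gammaH_zero]

lemma gammaH_single (i : Fin n) :
    gammaH n (Pi.single i 1) = qmk n (PresentedGroup.of (Sum.inl i)) := by
  rw [gammaH]
  rw [Fintype.prod_eq_single i (fun j hj => by simp [Pi.single_apply, hj])]
  simp

lemma gammaH_surjective : ∀ x : Q n, ∃ a : Fin n → ℤ, gammaH n a = x := by
  have hrange : ∀ x : Q n, x ∈ Subgroup.closure (Set.range (gammaH n)) → ∃ a, gammaH n a = x := by
    intro x hx
    refine Subgroup.closure_induction ?_ ?_ ?_ ?_ hx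
    · rintro y ⟨a, rfl⟩; exact ⟨a, rfl⟩
    · exact ⟨0, gammaH_zero⟩
    · rintro y z _ _ ⟨a, rfl⟩ ⟨b, rfl⟩; exact ⟨a + b, gammaH_add a b⟩
    · rintro y _ ⟨a, rfl⟩; exact ⟨-a, gammaH_neg a⟩
  intro x
  obtain ⟨y, rfl⟩ := QuotientGroup.mk'_surjective _ x
  refine hrange _ ?_
  have hy : y ∈ Subgroup.comap (qmk n) (Subgroup.closure (Set.range (gammaH n))) := by
    refine PresentedGroup.generated_by _ _ (fun t => ?_) y
    refine Subgroup.mem_comap.mpr ?_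
    match t with
    | Sum.inl i =>
      exact Subgroup.subset_closure ⟨Pi.single i 1, gammaH_single i⟩
    | Sum.inr p =>
      have h1 : (PresentedGroup.of (Sum.inr p) : HeisenbergGroup n) ∈ heisenbergCenterSubgroup n :=
        Subgroup.subset_closure ⟨p, rfl⟩
      have h2 : qmk n (PresentedGroup.of (Sum.inr p)) = 1 := qmk_eq_one h1
      show (qmk n) (PresentedGroup.of (Sum.inr p)) ∈ _
      rw [h2]
      exact one_mem _
  exact Subgroup.mem_comap.mp hy

lemma center_le_Z (hn : 2 ≤ n) :
    Subgroup.center (HeisenbergGroup n) ≤ heisenbergCenterSubgroup n := by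
  intro x hx
  -- first: the `a`-part of `piH x` vanishes
  have hA : (piH n x).a = 0 := by
    have key : ∀ i : Fin n, ∀ q : HeisenbergPairs n,
        (piH n x).a q.1.2 * (Pi.single i 1 : Fin n → ℤ) q.1.1 = (Pi.single i 1 : Fin n → ℤ) q.1.2 * (piH n x).a q.1.1 := by
      intro i q
      have hcomm := Subgroup.mem_center_iff.mp hx
        ((PresentedGroup.of (Sum.inl i) : HeisenbergGroup n))
      have := congrArg (fun m => (piH n m).c q) hcomm
      have this : (genMap n (Sum.inl i) * piH n x).c q = (piH n x * genMap n (Sum.inl i)).c q := by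
        rw [← piH_of]
        exact (congrArg (fun m => m.c q) (map_mul (piH n) _ _)).symm.trans
          (this.trans (congrArg (fun m => m.c q) (map_mul (piH n) _ _)))
      simp only [map_mul, piH_of, genMap, Model.mul_c, Model.mul_a] at this
      have h0 : (genMap n (Sum.inl i)).c q = 0 := rfl
      simp only [genMap] at *
      -- this : single.c-term equation
      linarith [this]
    funext j
    have h2 : (0 : ℕ) < n := by omega
    by_cases hj : (j : ℕ) = 0
    · -- use q = (0, 1), i = 1
      have h1n : (1 : ℕ) < n := by omega
      have hq : ((⟨0, h2⟩ : Fin n), (⟨1, h1n⟩ : Fin n)).1 < ((⟨0, h2⟩ : Fin n), (⟨1, h1n⟩ : Fin n)).2 := by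
        simp [Fin.lt_def]
      have := key ⟨1, h1n⟩ ⟨_, hq⟩
      have hj0 : j = ⟨0, h2⟩ := by ext; simp [hj]
      subst hj0
      simpa [Pi.single_apply, Fin.ext_iff] using this.symm
    · -- use q = (0, j), i = 0
      have hq : ((⟨0, h2⟩ : Fin n), j).1 < ((⟨0, h2⟩ : Fin n), j).2 := by
        simp [Fin.lt_def]; omega
      have := key ⟨0, h2⟩ ⟨_, hq⟩
      simpa [Pi.single_apply, Fin.ext_iff, hj] using this
  -- now pass to the quotient
  obtain ⟨a, ha⟩ := gammaH_surjective (qmk n x)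
  have hb : betaH n (qmk n x) = 1 := by
    show alphaH n x = 1
    simp only [alphaH, MonoidHom.comp_apply, fstHom, MonoidHom.coe_mk, OneHom.coe_mk, hA]
    rfl
  have ha0 : Multiplicative.ofAdd a = 1 := by rw [← betaH_gammaH a, ha, hb]
  have ha0' : a = 0 := ha0
  rw [ha0', gammaH_zero] at ha
  exact (QuotientGroup.eq_one_iff x).mp ha.symm

instance : CommGroup (heisenbergCenterSubgroup n) :=
  { (inferInstance : Group (heisenbergCenterSubgroup n)) with
    mul_comm := fun a b =>
      Subtype.ext (Subgroup.mem_center_iff.mp (Z_le_center a.2) b.1).symm }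

def felem (p : HeisenbergPairs n) : heisenbergCenterSubgroup n :=
  ⟨PresentedGroup.of (Sum.inr p), Subgroup.subset_closure ⟨p, rfl⟩⟩

def psiZ (n : ℕ) : (heisenbergCenterSubgroup n) →* Multiplicative (HeisenbergPairs n → ℤ) where
  toFun z := Multiplicative.ofAdd ((piH n z.1).c)
  map_one' := by
    show Multiplicative.ofAdd ((piH n ((1 : heisenbergCenterSubgroup n) : HeisenbergGroup n)).c) = 1
    simp
  map_mul' z w := by
    have hz : (piH n z.1).a = 0 := a_eq_zero_of_mem_Z z.2
    have : (piH n ((z * w : heisenbergCenterSubgroup n) : HeisenbergGroup n)).c =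
        (piH n z.1).c + (piH n w.1).c := by
      funext q
      have : ((z * w : heisenbergCenterSubgroup n) : HeisenbergGroup n) = z.1 * w.1 := rfl
      rw [this, map_mul, Model.mul_c, hz]
      simp
    simp only [this, ofAdd_add]

noncomputable def FmZ (n : ℕ) :
    Multiplicative (HeisenbergPairs n → ℤ) →* heisenbergCenterSubgroup n where
  toFun c := ∏ p : HeisenbergPairs n, (felem p) ^ (Multiplicative.toAdd c p)
  map_one' := by simp
  map_mul' c d := by
    rw [← Finset.prod_mul_distrib]
    exact Finset.prod_congr rfl fun p _ => by
      rw [← zpow_add]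
      rfl
  
lemma psiZ_felem (p : HeisenbergPairs n) :
    psiZ n (felem p) = Multiplicative.ofAdd (Pi.single p 1) := by
  simp only [psiZ, MonoidHom.coe_mk, OneHom.coe_mk, felem, piH_of, genMap]

lemma psiZ_FmZ (c : Multiplicative (HeisenbergPairs n → ℤ)) : psiZ n (FmZ n c) = c := by
  show psiZ n (∏ p : HeisenbergPairs n, (felem p) ^ (Multiplicative.toAdd c p)) = c
  rw [map_prod]
  have h1 : ∀ p : HeisenbergPairs n, psiZ n ((felem p) ^ (Multiplicative.toAdd c p)) =
      Multiplicative.ofAdd (Multiplicative.toAdd c p • Pi.single p 1) := by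
    intro p
    rw [map_zpow, psiZ_felem, ofAdd_zsmul]
  simp_rw [h1]
  rw [← ofAdd_sum]
  have : ∑ p : HeisenbergPairs n, Multiplicative.toAdd c p • (Pi.single p 1 : HeisenbergPairs n → ℤ)
      = Multiplicative.toAdd c := by
    funext q
    simp [Finset.sum_apply, Pi.single_apply, Finset.sum_ite_eq']
  rw [this]
  rfl

lemma FmZ_surjective : Function.Surjective (FmZ n) := by
  intro z
  have h : ∀ x (hx : x ∈ heisenbergCenterSubgroup n),
      ∃ c, ((FmZ n c : heisenbergCenterSubgroup n) : HeisenbergGroup n) = x := by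
    intro x hx
    refine Subgroup.closure_induction ?_ ?_ ?_ ?_ hx
    · rintro y ⟨p, rfl⟩
      refine ⟨Multiplicative.ofAdd (Pi.single p 1), ?_⟩
      have : FmZ n (Multiplicative.ofAdd (Pi.single p 1)) = felem p := by
        show (∏ q : HeisenbergPairs n, (felem q) ^ ((Pi.single p 1 : HeisenbergPairs n → ℤ) q))
            = felem p
        rw [Fintype.prod_eq_single p (fun q hq => by simp [Pi.single_apply, hq])]
        simp
      rw [this]
      rfl
    · exact ⟨1, by rw [map_one]; rfl⟩
    · rintro y z _ _ ⟨c, rfl⟩ ⟨d, rfl⟩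
      exact ⟨c * d, by rw [map_mul]; rfl⟩
    · rintro y _ ⟨c, rfl⟩
      exact ⟨c⁻¹, by rw [map_inv]; rfl⟩
  obtain ⟨c, hc⟩ := h z.1 z.2
  exact ⟨c, Subtype.ext hc⟩

noncomputable def ZEquiv (n : ℕ) :
    (heisenbergCenterSubgroup n) ≃* Multiplicative (HeisenbergPairs n → ℤ) :=
  (MulEquiv.ofBijective (FmZ n)
    ⟨fun c d h => by rw [← psiZ_FmZ (n := n) c, ← psiZ_FmZ (n := n) d, h],
     FmZ_surjective⟩).symm

def pairsEquivSigma (n : ℕ) : HeisenbergPairs n ≃ Σ j : Fin n, Fin j.1 where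
  toFun p := ⟨p.1.2, ⟨p.1.1.1, p.2⟩⟩
  invFun s := ⟨(⟨s.2.1, lt_trans s.2.2 s.1.2⟩, s.1), s.2.2⟩
  left_inv := by rintro ⟨⟨a, b⟩, h⟩; rfl
  right_inv := by rintro ⟨j, k⟩; rfl

lemma card_pairs (n : ℕ) : Fintype.card (HeisenbergPairs n) = n * (n - 1) / 2 := by
  rw [Fintype.card_congr (pairsEquivSigma n), Fintype.card_sigma]
  simp only [Fintype.card_fin]
  rw [Fin.sum_univ_eq_sum_range (fun i => i), Finset.sum_range_id]

noncomputable def finalEquiv (n : ℕ) :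
    (heisenbergCenterSubgroup n) ≃* Multiplicative (Fin (n * (n - 1) / 2) → ℤ) :=
  (ZEquiv n).trans (AddEquiv.toMultiplicative
    { Equiv.piCongrLeft' (fun _ => ℤ) (Fintype.equivFinOfCardEq (card_pairs n)) with
      map_add' := fun f g => rfl })

end HeisenbergAux

/-- For `n ≥ 2`, the center of `Hₙ` equals the subgroup `Zₙ` generated by
the elements `f_{ij}`, `1 ≤ i < j ≤ n`, and `Zₙ` is free abelian of rank `n(n−1)/2`. -/
theorem heisenberg_center_eq_and_free_abelian (n : ℕ) (hn : 2 ≤ n) :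
    Subgroup.center (HeisenbergGroup n) = heisenbergCenterSubgroup n ∧
    Nonempty ((heisenbergCenterSubgroup n) ≃* Multiplicative (Fin (n * (n - 1) / 2) → ℤ)) := by
  exact ⟨le_antisymm (HeisenbergAux.center_le_Z hn) HeisenbergAux.Z_le_center,
    ⟨HeisenbergAux.finalEquiv n⟩⟩
end
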